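/- Let (A B; B† C) be a positive semidefinite block matrix with A, C square blocks. Then Tr(A)·Tr(C) ≥ (Tr√(B†B))², i.e., the product of the traces of the diagonal blocks is at least the square of the trace norm of the off-diagonal block B. -/

import Mathlib

open Matrix BigOperators ComplexOrder
open scoped Classical

/-- The positive semidefinite square root of a matrix (0 if the matrix is not PSD). -/
noncomputable def msqrt {n : ℕ} (A : Matrix (Fin n) (Fin n) ℂ) : Matrix (Fin n) (Fin n) ℂ :=
  if h : A.PosSemidef then
    (h.1.eigenvectorUnitary : Matrix (Fin n) (Fin n) ℂ) *
      diagonal ((↑) ∘ (√·) ∘ h.1.eigenvalues) *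
      (star h.1.eigenvectorUnitary : Matrix (Fin n) (Fin n) ℂ)
  else 0

lemma trace_re_nonneg_of_psd {n : Type*} [Fintype n] {M : Matrix n n ℂ}
    (hM : M.PosSemidef) : 0 ≤ M.trace.re := by
  have hdiag : ∀ i, 0 ≤ (M i i).re := by
    intro i
    have h2 : (0 : ℂ) ≤ M i i := hM.diag_nonneg
    simpa using (Complex.le_def.mp h2).1
  simpa [Matrix.trace, Matrix.diag, Complex.re_sum] using
    Finset.sum_nonneg (fun i _ => hdiag i)

set_option maxHeartbeats 1000000 in
theorem stmt_5 {p q : ℕ} (A : Matrix (Fin p) (Fin p) ℂ) (B : Matrix (Fin p) (Fin q) ℂ)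
    (C : Matrix (Fin q) (Fin q) ℂ)
    (h : (Matrix.fromBlocks A B Bᴴ C).PosSemidef) :
    A.trace.re * C.trace.re ≥ ((msqrt (Bᴴ * B)).trace.re) ^ 2 := by
  classical
  have H : (Bᴴ * B).PosSemidef := Matrix.posSemidef_conjTranspose_mul_self B
  set V : Matrix (Fin q) (Fin q) ℂ := (H.1.eigenvectorUnitary : Matrix (Fin q) (Fin q) ℂ)
    with hVdef
  set lam : Fin q → ℝ := H.1.eigenvalues with hlamdef
  have hVV : star V * V = 1 := Matrix.mem_unitaryGroup_iff'.mp H.1.eigenvectorUnitary.2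
  -- sandwich notation
  set sand : (Fin q → ℝ) → Matrix (Fin q) (Fin q) ℂ :=
    fun f => V * Matrix.diagonal (Complex.ofReal ∘ f) * star V with hsanddef
  have keymul : ∀ f g : Fin q → ℝ,
      (fun i => (Complex.ofReal ∘ f) i * (Complex.ofReal ∘ g) i) = Complex.ofReal ∘ (f * g) := by
    intro f g; funext i; simp
  have sand_mul : ∀ f g, sand f * sand g = sand (f * g) := by
    intro f g
    simp only [hsanddef, Matrix.mul_assoc]
    rw [← Matrix.mul_assoc (star V) V, hVV, Matrix.one_mul,
      ← Matrix.mul_assoc (Matrix.diagonal _) (Matrix.diagonal _),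
      Matrix.diagonal_mul_diagonal, keymul]
  have sand_herm : ∀ f, (sand f)ᴴ = sand f := by
    intro f
    have hd : star (Complex.ofReal ∘ f) = Complex.ofReal ∘ f := by
      funext i; simp [Complex.conj_ofReal]
    simp only [hsanddef, Matrix.star_eq_conjTranspose, Matrix.conjTranspose_mul,
      Matrix.conjTranspose_conjTranspose, Matrix.diagonal_conjTranspose, hd,
      Matrix.mul_assoc]
  have spectral : Bᴴ * B = sand lam := H.1.spectral_theorem
  -- the square root
  set P : Matrix (Fin q) (Fin q) ℂ := sand (Real.sqrt ∘ lam) with hPdef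
  have hP : (H.1.eigenvectorUnitary : Matrix (Fin q) (Fin q) ℂ) *
      diagonal ((↑) ∘ (√·) ∘ H.1.eigenvalues) *
      (star H.1.eigenvectorUnitary : Matrix (Fin q) (Fin q) ℂ) = P := rfl
  -- pseudo-inverse of the square root
  set g : Fin q → ℝ := fun i => (Real.sqrt (lam i))⁻¹ with hgdef
  set K : Matrix (Fin p) (Fin q) ℂ := B * sand g with hKdef
  have hKH : Kᴴ = sand g * Bᴴ := by
    rw [hKdef, Matrix.conjTranspose_mul, sand_herm]
  have hglam : g * lam = Real.sqrt ∘ lam := by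
    funext i
    simp only [Pi.mul_apply, Function.comp_apply, hgdef]
    rw [inv_mul_eq_div, Real.div_sqrt]
  have hKB : Kᴴ * B = P := by
    rw [hKH, Matrix.mul_assoc, spectral, sand_mul, hglam, hPdef]
  set e : Fin q → ℝ := g * (lam * g) with hedef
  have hKK : Kᴴ * K = sand e := by
    rw [hKH, hKdef, Matrix.mul_assoc, ← Matrix.mul_assoc Bᴴ B (sand g), spectral,
      sand_mul, sand_mul, hedef]
  have hge : g * e = g := by
    funext i
    simp only [Pi.mul_apply, hedef, hgdef]
    rcases eq_or_ne (Real.sqrt (lam i)) 0 with h0 | h0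
    · simp [h0]
    · have hl : lam i = Real.sqrt (lam i) * Real.sqrt (lam i) :=
        (Real.mul_self_sqrt (H.eigenvalues_nonneg i)).symm
      rw [hl]; field_simp
      rw [Real.sqrt_sq (Real.sqrt_nonneg _)]
  -- Q := K * Kᴴ is a projection
  set Q : Matrix (Fin p) (Fin p) ℂ := K * Kᴴ with hQdef
  have hQherm : Qᴴ = Q := by
    rw [hQdef, Matrix.conjTranspose_mul, Matrix.conjTranspose_conjTranspose]
  have hKsand : K * sand e = K := by
    rw [hKdef, Matrix.mul_assoc, sand_mul, hge]
  have hQproj : Q * Q = Q := by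
    rw [hQdef, Matrix.mul_assoc, ← Matrix.mul_assoc Kᴴ K Kᴴ, hKK,
      ← Matrix.mul_assoc K, hKsand]
  -- 1 - Q is PSD
  have hQpsd1 : (1 - Q).PosSemidef := by
    have h1 : (1 - Q)ᴴ * (1 - Q) = 1 - Q := by
      rw [Matrix.conjTranspose_sub, hQherm, Matrix.conjTranspose_one]
      rw [Matrix.sub_mul, Matrix.mul_sub, Matrix.mul_sub, hQproj]
      simp
    rw [← h1]
    exact Matrix.posSemidef_conjTranspose_mul_self _
  -- A and C are PSD
  have hA : A.PosSemidef := by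
    have := h.submatrix (Sum.inl : Fin p → Fin p ⊕ Fin q)
    have he : (Matrix.fromBlocks A B Bᴴ C).submatrix (Sum.inl : Fin p → Fin p ⊕ Fin q)
        Sum.inl = A := by ext i j; simp
    rwa [he] at this
  have hC : C.PosSemidef := by
    have := h.submatrix (Sum.inr : Fin q → Fin p ⊕ Fin q)
    have he : (Matrix.fromBlocks A B Bᴴ C).submatrix (Sum.inr : Fin q → Fin p ⊕ Fin q)
        Sum.inr = C := by ext i j; simp
    rwa [he] at this
  set a : ℝ := (Kᴴ * A * K).trace.re with hadef
  set s : ℝ := P.trace.re with hsdef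
  set c : ℝ := C.trace.re with hcdef
  -- a ≤ Tr A
  open scoped MatrixOrder in
  have ha_le : a ≤ A.trace.re := by
    have htr : (Kᴴ * A * K).trace = (A * Q).trace := by
      rw [Matrix.trace_mul_cycle, hQdef]
      exact Matrix.trace_mul_comm (K * Kᴴ) A
    have hS : CFC.sqrt A * CFC.sqrt A = A := CFC.sqrt_mul_sqrt_self A hA.nonneg
    have key : ((CFC.sqrt A) ᴴ * (1 - Q) * CFC.sqrt A).PosSemidef :=
      hQpsd1.conjTranspose_mul_mul_same _
    have hre := trace_re_nonneg_of_psd key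
    have heq : ((CFC.sqrt A) ᴴ * (1 - Q) * CFC.sqrt A).trace = A.trace - (A * Q).trace := by
      rw [(CFC.sqrt_nonneg A).posSemidef.1, Matrix.trace_mul_cycle, hS,
        Matrix.mul_sub, Matrix.mul_one, Matrix.trace_sub]
    rw [heq] at hre
    have h2 : 0 ≤ A.trace.re - (A * Q).trace.re := by
      simpa [Complex.sub_re] using hre
    rw [hadef, htr]; linarith
  -- Tr(Bᴴ K) = star Tr(Kᴴ B)
  have hBK : (Bᴴ * K).trace = star ((Kᴴ * B).trace) := by
    rw [← Matrix.trace_conjTranspose, Matrix.conjTranspose_mul,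
      Matrix.conjTranspose_conjTranspose]
  -- quadratic inequality
  have hquad : ∀ t : ℝ, 0 ≤ a * (t * t) + (2 * s) * t + c := by
    intro t
    set N : Matrix (Fin p ⊕ Fin q) (Fin q) ℂ :=
      Matrix.fromRows ((t : ℂ) • K) (1 : Matrix (Fin q) (Fin q) ℂ) with hNdef
    have hpsd := h.conjTranspose_mul_mul_same N
    have hre := trace_re_nonneg_of_psd hpsd
    have hexp : Nᴴ * Matrix.fromBlocks A B Bᴴ C * N =
        ((t : ℂ) * (t : ℂ)) • (Kᴴ * A * K) + (t : ℂ) • (Kᴴ * B) + (t : ℂ) • (Bᴴ * K) + C := by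
      rw [hNdef, Matrix.mul_assoc, Matrix.fromBlocks_mul_fromRows,
        Matrix.conjTranspose_fromRows_eq_fromCols_conjTranspose,
        Matrix.fromCols_mul_fromRows]
      simp only [Matrix.conjTranspose_smul, Complex.star_def, Complex.conj_ofReal,
        Matrix.conjTranspose_one, Matrix.mul_one, Matrix.one_mul, Matrix.mul_add,
        Matrix.add_mul, Matrix.mul_smul, Matrix.smul_mul, smul_smul, Matrix.mul_assoc]
      abel
    rw [hexp] at hre
    rw [hadef, hsdef, hcdef]
    rw [Matrix.trace_add, Matrix.trace_add, Matrix.trace_add, Matrix.trace_smul,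
      Matrix.trace_smul, Matrix.trace_smul, hBK, hKB] at hre
    simp only [smul_eq_mul, Complex.add_re, ← Complex.ofReal_mul,
      Complex.re_ofReal_mul, Complex.star_def, Complex.conj_re] at hre
    -- hre : 0 ≤ t*t * (KᴴAK).trace.re + t * P.trace.re + t * P.trace.re + C.trace.re
    nlinarith [hre]
  -- discriminant
  have hdisc := discrim_le_zero hquad
  rw [discrim] at hdisc
  have hc0 : 0 ≤ c := trace_re_nonneg_of_psd hC
  have hs2 : s ^ 2 ≤ a * c := by nlinarith
  have hgoal : (msqrt (Bᴴ * B)).trace.re = s := by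
    rw [msqrt, dif_pos H, hP, hsdef]
  rw [hgoal]
  nlinarith [mul_le_mul_of_nonneg_right ha_le hc0]
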